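/- Let r ≥ 1 and consider ℚ^r. Let C = {ξ : ξ₁ ≥ ξ₂ ≥ ⋯ ≥ ξ_r ≥ 0}, Φ = {ξ : Σ|ξ_i| ≤ 1}, and D = conv(0, ε₁, (ε₁+ε₂)/2, …, (ε₁+⋯+ε_r)/r) over ℚ. Then Φ ∩ C = D. -/

import Mathlib

open Finset

private lemma ite_sum_aux (r k : ℕ) (hk : k < r) (c : ℚ) :
    ∑ n ∈ Finset.range r, (if n ≤ k then c else 0) = ((k : ℚ) + 1) * c := by
  rw [Finset.range_eq_Ico, ← Finset.sum_Ico_consecutive _ (Nat.zero_le (k+1)) hk]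
  have h1 : ∑ n ∈ Finset.Ico 0 (k+1), (if n ≤ k then c else 0) = ((k : ℚ) + 1) * c := by
    rw [Finset.sum_congr rfl (fun n hn => if_pos (Nat.lt_succ_iff.mp (Finset.mem_Ico.mp hn).2))]
    simp [mul_comm]
  have h2 : ∑ n ∈ Finset.Ico (k+1) r, (if n ≤ k then c else 0) = 0 := by
    apply Finset.sum_eq_zero
    intro n hn
    have := (Finset.mem_Ico.mp hn).1
    exact if_neg (by omega)
  rw [h1, h2, add_zero]

private lemma tele2 (η : ℕ → ℚ) (r : ℕ) :
    ∑ n ∈ Finset.range r, ((n : ℚ) + 1) * (η n - η (n+1)) =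
      ∑ n ∈ Finset.range r, η n - r * η r := by
  have h : ∀ n ∈ Finset.range r, ((n : ℚ) + 1) * (η n - η (n+1)) =
      η n - (((n+1 : ℕ) : ℚ) * η (n+1) - (n : ℚ) * η n) := by
    intro n _; push_cast; ring
  rw [Finset.sum_congr rfl h, Finset.sum_sub_distrib,
    Finset.sum_range_sub (fun n => (n : ℚ) * η n)]
  simp

private lemma tele1 (η : ℕ → ℚ) (r j : ℕ) (hj : j < r) :
    ∑ n ∈ Finset.range r, ((n : ℚ) + 1) * (η n - η (n+1)) * (if j ≤ n then 1/((n:ℚ)+1) else 0)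
      = η j - η r := by
  rw [Finset.range_eq_Ico, ← Finset.sum_Ico_consecutive _ (Nat.zero_le j) (le_of_lt hj)]
  have h1 : ∑ n ∈ Finset.Ico 0 j,
      ((n : ℚ) + 1) * (η n - η (n+1)) * (if j ≤ n then 1/((n:ℚ)+1) else 0) = 0 := by
    apply Finset.sum_eq_zero
    intro n hn
    rw [if_neg (Nat.not_le.mpr (Finset.mem_Ico.mp hn).2), mul_zero]
  have h2 : ∑ n ∈ Finset.Ico j r,
      ((n : ℚ) + 1) * (η n - η (n+1)) * (if j ≤ n then 1/((n:ℚ)+1) else 0)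
      = ∑ n ∈ Finset.Ico j r, ((-η) (n+1) - (-η) n) := by
    apply Finset.sum_congr rfl
    intro n hn
    rw [if_pos (Finset.mem_Ico.mp hn).1]
    have hne : (n : ℚ) + 1 ≠ 0 := by positivity
    field_simp
    simp only [Pi.neg_apply]
    ring
  rw [h1, h2, zero_add, Finset.sum_Ico_eq_sub _ (le_of_lt hj),
    Finset.sum_range_sub (fun n => (-η) n), Finset.sum_range_sub (fun n => (-η) n)]
  simp only [Pi.neg_apply]
  ring

/-- Sp(V)/SO(2r+1) case: the intersection of the weight polytope
`{Σ|ξᵢ| ≤ 1}` with the Weyl chamber `{ξ₁ ≥ ⋯ ≥ ξ_r ≥ 0}` equals the simplex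
spanned by `0` and the normalized fundamental weights `(ε₁+⋯+εᵢ)/i`. -/
theorem stmt9 (r : ℕ) (hr : 1 ≤ r) :
    {ξ : Fin r → ℚ |
        (∀ i : Fin r, ∀ h : (i : ℕ) + 1 < r, ξ ⟨(i : ℕ) + 1, h⟩ ≤ ξ i) ∧
        (∀ i, 0 ≤ ξ i) ∧ ∑ i, |ξ i| ≤ 1} =
      convexHull ℚ (insert (0 : Fin r → ℚ)
        (Set.range (fun i : Fin r => fun j : Fin r =>
          if j ≤ i then (1 : ℚ) / ((i : ℕ) + 1) else 0))) := by
  apply Set.Subset.antisymm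
  · -- forward: S ⊆ hull
    rintro ξ ⟨hmono, hpos, hsum⟩
    set η : ℕ → ℚ := fun n => if h : n < r then ξ ⟨n, h⟩ else 0 with hη
    have hη_pos : ∀ n, 0 ≤ η n := by
      intro n
      by_cases h : n < r
      · simpa [hη, h] using hpos ⟨n, h⟩
      · simp [hη, h]
    have hη_mono : ∀ n, η (n+1) ≤ η n := by
      intro n
      by_cases h1 : n + 1 < r
      · have h0 : n < r := by omega
        simpa [hη, h1, h0] using hmono ⟨n, h0⟩ h1
      · by_cases h0 : n < r
        · simpa [hη, h1, h0] using hpos ⟨n, h0⟩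
        · simp [hη, h1, h0]
    have hη_r : η r = 0 := by simp [hη]
    have hξ : ∀ i : Fin r, ξ i = η i := by
      intro i; simp [hη, i.isLt]
    have hsum' : ∑ n ∈ Finset.range r, η n ≤ 1 := by
      rw [← Fin.sum_univ_eq_sum_range]
      calc ∑ i : Fin r, η i = ∑ i : Fin r, |ξ i| := by
            apply Finset.sum_congr rfl
            intro i _
            rw [abs_of_nonneg (hpos i), hξ i]
        _ ≤ 1 := hsum
    set c : ℕ → ℚ := fun n => ((n:ℚ)+1) * (η n - η (n+1)) with hc
    have hc_nonneg : ∀ n, 0 ≤ c n := fun n =>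
      mul_nonneg (by positivity) (sub_nonneg.mpr (hη_mono n))
    have hc_sum : ∑ n ∈ Finset.range r, c n = ∑ n ∈ Finset.range r, η n := by
      rw [hc, tele2 η r, hη_r]; ring
    set w : Option (Fin r) → ℚ :=
      fun o => Option.elim o (1 - ∑ n ∈ Finset.range r, c n) (fun i => c i) with hw
    set z : Option (Fin r) → (Fin r → ℚ) :=
      fun o => Option.elim o 0 (fun i j => if j ≤ i then (1:ℚ)/((i:ℕ)+1) else 0) with hz
    have hw1 : ∑ o : Option (Fin r), w o = 1 := by
      rw [Fintype.sum_option]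
      simp only [hw, Option.elim]
      rw [Fin.sum_univ_eq_sum_range c r]
      ring
    have key : Finset.univ.centerMass w z ∈ convexHull ℚ (insert (0 : Fin r → ℚ)
        (Set.range (fun i : Fin r => fun j : Fin r =>
          if j ≤ i then (1 : ℚ) / ((i : ℕ) + 1) else 0))) := by
      refine Finset.centerMass_mem_convexHull _ ?_ ?_ ?_
      · rintro (_ | i) _
        · simpa [hw] using by rw [hc_sum]; linarith
        · exact hc_nonneg i
      · rw [hw1]; norm_num
      · rintro (_ | i) _
        · exact Set.mem_insert _ _
        · exact Set.mem_insert_of_mem _ ⟨i, rfl⟩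
    have hcm : Finset.univ.centerMass w z = ξ := by
      rw [Finset.centerMass_eq_of_sum_1 _ _ hw1]
      funext j
      rw [Finset.sum_apply]
      simp only [Pi.smul_apply, smul_eq_mul]
      rw [Fintype.sum_option]
      simp only [hw, hz, Option.elim, Pi.zero_apply, mul_zero, zero_add]
      have hcong : ∀ i ∈ (Finset.univ : Finset (Fin r)),
          c i * (if j ≤ i then (1:ℚ)/(((i:ℕ):ℚ)+1) else 0)
          = c i * (if (j:ℕ) ≤ (i:ℕ) then (1:ℚ)/(((i:ℕ):ℚ)+1) else 0) := by
        intro i _; simp only [Fin.le_def]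
      rw [Finset.sum_congr rfl hcong,
        Fin.sum_univ_eq_sum_range (fun n => c n * (if (j:ℕ) ≤ n then (1:ℚ)/((n:ℚ)+1) else 0)) r]
      simp only [hc]
      rw [tele1 η r j j.isLt, hη_r, hξ j, sub_zero]
    rwa [hcm] at key
  · -- reverse: hull ⊆ S
    apply convexHull_min
    · rintro x hx
      rcases hx with rfl | ⟨i, rfl⟩
      · exact ⟨fun i h => le_refl _, fun i => le_refl _, by simp⟩
      · have hne : ((i:ℕ):ℚ) + 1 ≠ 0 := by positivity
        refine ⟨?_, ?_, ?_⟩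
        · intro jj h
          dsimp only
          by_cases h1 : (⟨(jj:ℕ)+1, h⟩ : Fin r) ≤ i
          · have h1' : (jj : ℕ) + 1 ≤ (i : ℕ) := h1
            have h2 : jj ≤ i := by
              rw [Fin.le_def]; omega
            rw [if_pos h1, if_pos h2]
          · rw [if_neg h1]
            split_ifs <;> positivity
        · intro jj
          dsimp only
          split_ifs <;> positivity
        · have : ∑ j : Fin r, |if j ≤ i then (1:ℚ)/(((i:ℕ):ℚ)+1) else 0|
              = (((i:ℕ):ℚ)+1) * ((1:ℚ)/(((i:ℕ):ℚ)+1)) := by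
            have h1 : ∀ j ∈ (Finset.univ : Finset (Fin r)),
                |if j ≤ i then (1:ℚ)/(((i:ℕ):ℚ)+1) else 0|
                = (if (j:ℕ) ≤ (i:ℕ) then (1:ℚ)/(((i:ℕ):ℚ)+1) else 0) := by
              intro j _
              rw [abs_of_nonneg (by split_ifs <;> positivity)]
              simp only [Fin.le_def]
            rw [Finset.sum_congr rfl h1,
              Fin.sum_univ_eq_sum_range
                (fun n => if n ≤ (i:ℕ) then (1:ℚ)/(((i:ℕ):ℚ)+1) else 0) r,
              ite_sum_aux r i i.isLt]
          rw [this, mul_one_div, div_self hne]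
    · rintro x ⟨hx1, hx2, hx3⟩ y ⟨hy1, hy2, hy3⟩ a b ha hb hab
      have hx3' : ∑ i, x i ≤ 1 := by
        calc ∑ i, x i = ∑ i, |x i| :=
              Finset.sum_congr rfl (fun i _ => (abs_of_nonneg (hx2 i)).symm)
          _ ≤ 1 := hx3
      have hy3' : ∑ i, y i ≤ 1 := by
        calc ∑ i, y i = ∑ i, |y i| :=
              Finset.sum_congr rfl (fun i _ => (abs_of_nonneg (hy2 i)).symm)
          _ ≤ 1 := hy3
      refine ⟨?_, ?_, ?_⟩
      · intro i h
        simp only [Pi.add_apply, Pi.smul_apply, smul_eq_mul]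
        exact add_le_add (mul_le_mul_of_nonneg_left (hx1 i h) ha)
          (mul_le_mul_of_nonneg_left (hy1 i h) hb)
      · intro i
        simp only [Pi.add_apply, Pi.smul_apply, smul_eq_mul]
        exact add_nonneg (mul_nonneg ha (hx2 i)) (mul_nonneg hb (hy2 i))
      · have habs : ∀ i ∈ (Finset.univ : Finset (Fin r)),
            |(a • x + b • y) i| = a * x i + b * y i := by
          intro i _
          simp only [Pi.add_apply, Pi.smul_apply, smul_eq_mul]
          exact abs_of_nonneg (add_nonneg (mul_nonneg ha (hx2 i)) (mul_nonneg hb (hy2 i)))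
        rw [Finset.sum_congr rfl habs, Finset.sum_add_distrib, ← Finset.mul_sum, ← Finset.mul_sum]
        calc a * ∑ i, x i + b * ∑ i, y i ≤ a * 1 + b * 1 :=
              add_le_add (mul_le_mul_of_nonneg_left hx3' ha)
                (mul_le_mul_of_nonneg_left hy3' hb)
          _ = 1 := by rw [mul_one, mul_one, hab]
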